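/- With ρ₁⁻, ρ₂⁻, ρ₁⁺, ρ₂⁺ as defined and β ∈ (-1,1), we have 1 - c₁(q) = ((1-β)ρ₂⁻ - (1+β)ρ₁⁺)/((1-β)(ρ₂⁻ - ρ₁⁻)) > 0, i.e., c₁(q) < 1. -/

import Mathlib

theorem c1_lt_one (q μp μm β : ℝ) (hq : 0 < q) (hβ : β ∈ Set.Ioo (-1 : ℝ) 1)
    (ρ1m ρ2m ρ1p ρ2p c₁ : ℝ)
    (hρ1m : ρ1m = -(μm + Real.sqrt (μm^2 + 2*q)))
    (hρ2m : ρ2m = -μm + Real.sqrt (μm^2 + 2*q))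
    (hρ1p : ρ1p = -(μp + Real.sqrt (μp^2 + 2*q)))
    (hρ2p : ρ2p = -μp + Real.sqrt (μp^2 + 2*q))
    (hc₁ : c₁ = ((1+β)*ρ1p - (1-β)*ρ1m) / ((1-β)*(ρ2m - ρ1m))) :
    1 - c₁ = ((1-β)*ρ2m - (1+β)*ρ1p) / ((1-β)*(ρ2m - ρ1m)) ∧
    0 < 1 - c₁ ∧ c₁ < 1 := by
  obtain ⟨hβ1, hβ2⟩ := hβ
  have hm : |μm| < Real.sqrt (μm^2 + 2*q) := by
    rw [← Real.sqrt_sq_eq_abs]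
    exact Real.sqrt_lt_sqrt (sq_nonneg _) (by linarith)
  have hp : |μp| < Real.sqrt (μp^2 + 2*q) := by
    rw [← Real.sqrt_sq_eq_abs]
    exact Real.sqrt_lt_sqrt (sq_nonneg _) (by linarith)
  have hm1 := abs_lt.mp hm
  have hp1 := abs_lt.mp hp
  have h2m : 0 < ρ2m := by rw [hρ2m]; linarith [hm1.2]
  have h1p : ρ1p < 0 := by rw [hρ1p]; linarith [hp1.1]
  have h1m : ρ1m < 0 := by rw [hρ1m]; linarith [hm1.1]
  have hden : 0 < (1-β)*(ρ2m - ρ1m) := by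
    apply mul_pos (by linarith)
    linarith
  have hnum : 0 < (1-β)*ρ2m - (1+β)*ρ1p := by
    have : (1+β)*ρ1p < 0 := mul_neg_of_pos_of_neg (by linarith) h1p
    nlinarith
  have heq : 1 - c₁ = ((1-β)*ρ2m - (1+β)*ρ1p) / ((1-β)*(ρ2m - ρ1m)) := by
    rw [hc₁]
    rw [eq_div_iff hden.ne', sub_mul, div_mul_cancel₀ _ hden.ne']
    ring
  refine ⟨heq, ?_, ?_⟩ <;> [skip; skip] <;>
  · rw [show c₁ = 1 - (1 - c₁) by ring] at *
    have := div_pos hnum hden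
    linarith [heq ▸ this]
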